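/- If in the canonicalization C₂ one chooses k₁ = k₄ and k₂ = k₃ (so E[φ(k₁)] = E[φ(k₄)] and E[φ(k₂)] = E[φ(k₃)] for every φ), then the residual shaping E[γ³φ(k₁) − γ³φ(k₄) + γ²φ(k₃) − γ²φ(k₂)] vanishes for any potential φ; hence C₂(R') = C₂(R) for any potentially shaped reward R' = R + γφ(s') − φ(s). -/
import Mathlib


/-- If in `C₂` one chooses `k₁, k₄` identically distributed and `k₂, k₃`
identically distributed (so their potential expectations agree for every
potential), the residual shaping vanishes and `C₂(R') = C₂(R)` for any
potentially shaped reward `R'`. -/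
theorem stmt5 {St Ac Ω : Type*} [Fintype Ω]
    (R : St → Ac → St → ℝ) (φ : St → ℝ) (γ : ℝ) (hγ0 : 0 ≤ γ) (hγ1 : γ ≤ 1)
    (p : Ω → ℝ) (hp0 : ∀ ω, 0 ≤ p ω) (hp1 : ∑ ω, p ω = 1)
    (Av : Ω → Ac) (S1 S2 S3 S4 k1 k2 k3 k4 : Ω → St)
    (h14 : ∀ ψ : St → ℝ, ∑ ω, p ω * ψ (k1 ω) = ∑ ω, p ω * ψ (k4 ω))
    (h23 : ∀ ψ : St → ℝ, ∑ ω, p ω * ψ (k2 ω) = ∑ ω, p ω * ψ (k3 ω))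
    (s : St) (a : Ac) (s' : St) :
    let E := fun (f : Ω → ℝ) => ∑ ω, p ω * f ω
    let C2 := fun (Q : St → Ac → St → ℝ) =>
      Q s a s' + E (fun ω =>
        γ * Q s' (Av ω) (S1 ω) - Q s (Av ω) (S2 ω) - γ * Q (S3 ω) (Av ω) (S4 ω)
        + γ ^ 2 * Q (S1 ω) (Av ω) (k1 ω) - γ * Q (S2 ω) (Av ω) (k2 ω)
        + γ * Q (S3 ω) (Av ω) (k3 ω) - γ ^ 2 * Q (S4 ω) (Av ω) (k4 ω))
    E (fun ω =>
        γ ^ 3 * φ (k1 ω) - γ ^ 3 * φ (k4 ω) + γ ^ 2 * φ (k3 ω) - γ ^ 2 * φ (k2 ω)) = 0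
    ∧ C2 (fun u b w => R u b w + γ * φ w - φ u) = C2 R := by
  intro E C2
  have A : ∑ ω, p ω * ((fun x => γ ^ 3 * φ x) (k1 ω)) = ∑ ω, p ω * ((fun x => γ ^ 3 * φ x) (k4 ω)) := h14 (fun x => γ ^ 3 * φ x)
  have B : ∑ ω, p ω * ((fun x => γ ^ 2 * φ x) (k2 ω)) = ∑ ω, p ω * ((fun x => γ ^ 2 * φ x) (k3 ω)) := h23 (fun x => γ ^ 2 * φ x)
  simp only at A B
  have hres : E (fun ω =>
      γ ^ 3 * φ (k1 ω) - γ ^ 3 * φ (k4 ω) + γ ^ 2 * φ (k3 ω) - γ ^ 2 * φ (k2 ω)) = 0 := by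
    simp only [E, mul_sub, mul_add, Finset.sum_sub_distrib, Finset.sum_add_distrib]
    linarith [A, B]
  refine ⟨hres, ?_⟩
  simp only [C2, E] at hres ⊢
  have hsum : ∑ ω, p ω *
      (γ * ((fun u b w => R u b w + γ * φ w - φ u) s' (Av ω) (S1 ω)) -
        (fun u b w => R u b w + γ * φ w - φ u) s (Av ω) (S2 ω) -
        γ * (fun u b w => R u b w + γ * φ w - φ u) (S3 ω) (Av ω) (S4 ω) +
        γ ^ 2 * (fun u b w => R u b w + γ * φ w - φ u) (S1 ω) (Av ω) (k1 ω) -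
        γ * (fun u b w => R u b w + γ * φ w - φ u) (S2 ω) (Av ω) (k2 ω) +
        γ * (fun u b w => R u b w + γ * φ w - φ u) (S3 ω) (Av ω) (k3 ω) -
        γ ^ 2 * (fun u b w => R u b w + γ * φ w - φ u) (S4 ω) (Av ω) (k4 ω)) =
      ∑ ω, (p ω *
        (γ * R s' (Av ω) (S1 ω) - R s (Av ω) (S2 ω) - γ * R (S3 ω) (Av ω) (S4 ω) +
          γ ^ 2 * R (S1 ω) (Av ω) (k1 ω) - γ * R (S2 ω) (Av ω) (k2 ω) +
          γ * R (S3 ω) (Av ω) (k3 ω) - γ ^ 2 * R (S4 ω) (Av ω) (k4 ω)) +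
        (p ω * (φ s - γ * φ s') +
          p ω * (γ ^ 3 * φ (k1 ω) - γ ^ 3 * φ (k4 ω) + γ ^ 2 * φ (k3 ω) - γ ^ 2 * φ (k2 ω)))) := by
    refine Finset.sum_congr rfl fun ω _ => ?_
    ring
  rw [hsum, Finset.sum_add_distrib, Finset.sum_add_distrib, hres, ← Finset.sum_mul, hp1]
  ring
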